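/- If x, y, z are elements of Z_2^n with z strictly smaller than x+y in the lexicographic order, then z can be written as x'+y' for some x' ≤ x and y' ≤ y in the lexicographic order. Consequently, the Minkowski sum of two lexicographic initial segments of Z_2^n is again a lexicographic initial segment. -/

import Mathlib

open Finset Pointwise

/-- The natural number encoding of `x ∈ (ZMod 2)^n`; the lexicographic order
(comparing the largest differing coordinate) corresponds to `<` on these values. -/
def lexNat {n : ℕ} (x : Fin n → ZMod 2) : ℕ := ∑ i, (x i).val * 2 ^ (i : ℕ)

/-- The initial segment of size `k` of a finite set `T ⊆ (ZMod 2)^n`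
with respect to the lexicographic order: the `k` lexicographically smallest elements of `T`. -/
def initSeg {n : ℕ} (T : Finset (Fin n → ZMod 2)) (k : ℕ) : Finset (Fin n → ZMod 2) :=
  T.filter fun x => (T.filter fun y => lexNat y < lexNat x).card < k

namespace Stmt0Aux

lemma sum_bits_lt (v : ℕ → ℕ) (hv : ∀ i, v i ≤ 1) (n : ℕ) :
    ∑ i ∈ Finset.range n, v i * 2 ^ i < 2 ^ n := by
  induction n with
  | zero => simp
  | succ n ih =>
    rw [Finset.sum_range_succ]
    have := hv n
    have h2 : v n * 2 ^ n ≤ 2 ^ n := by nlinarith [pow_pos (show (0:ℕ) < 2 by norm_num) n]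
    calc ∑ i ∈ Finset.range n, v i * 2 ^ i + v n * 2 ^ n < 2 ^ n + v n * 2 ^ n := by omega
    _ ≤ 2 ^ n + 2 ^ n := by omega
    _ = 2 ^ (n + 1) := by ring

lemma sum_bits_testBit (v : ℕ → ℕ) (hv : ∀ i, v i ≤ 1) (n j : ℕ) :
    (∑ i ∈ Finset.range n, v i * 2 ^ i).testBit j = decide (j < n ∧ v j = 1) := by
  induction n with
  | zero => simp
  | succ n ih =>
    rw [Finset.sum_range_succ, add_comm, mul_comm (v n),
      Nat.testBit_two_pow_mul_add _ (sum_bits_lt v hv n)]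
    by_cases hj : j < n
    · simp [hj, ih, Nat.lt_succ_of_lt hj]
    · by_cases hj' : j = n
      · subst hj'
        simp only [lt_irrefl, if_false, Nat.sub_self, Nat.testBit_zero]
        have := hv j
        simp only [Nat.lt_succ_self, true_and, decide_eq_decide]
        omega
      · have h1 : ¬ j < n + 1 := by omega
        have h2 : 1 ≤ j - n := by omega
        rw [if_neg hj]
        have : (v n).testBit (j - n) = false := by
          apply Nat.testBit_lt_two_pow
          calc v n ≤ 1 := hv n
          _ < 2 ^ 1 := by norm_num
          _ ≤ 2 ^ (j - n) := Nat.pow_le_pow_right (by norm_num) h2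
        simp [this, h1]

lemma lexNat_eq_sum {n : ℕ} (x : Fin n → ZMod 2) :
    lexNat x = ∑ i ∈ Finset.range n,
      (if h : i < n then (x ⟨i, h⟩).val else 0) * 2 ^ i := by
  rw [lexNat, Finset.sum_range fun i => _]
  apply Finset.sum_congr rfl
  intro i _
  simp [i.isLt]

lemma val_le_one (a : ZMod 2) : a.val ≤ 1 := by
  have := a.val_lt
  omega

lemma zmod2_cases' (a : ZMod 2) : a = 0 ∨ a = 1 := by revert a; decide

lemma zmod2_val_eq_one {a : ZMod 2} : a.val = 1 ↔ a = 1 := by revert a; decide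

lemma lexNat_testBit_lt {n : ℕ} (x : Fin n → ZMod 2) {j : ℕ} (hj : j < n) :
    (lexNat x).testBit j = decide (x ⟨j, hj⟩ = 1) := by
  rw [lexNat_eq_sum, sum_bits_testBit _ (fun i => by split <;> [exact val_le_one _; omega])]
  simp only [hj, dif_pos, true_and, decide_eq_decide]
  exact zmod2_val_eq_one

lemma lexNat_testBit_ge {n : ℕ} (x : Fin n → ZMod 2) {j : ℕ} (hj : ¬ j < n) :
    (lexNat x).testBit j = false := by
  rw [lexNat_eq_sum, sum_bits_testBit _ (fun i => by split <;> [exact val_le_one _; omega])]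
  simp [hj]

lemma lexNat_lt {n : ℕ} (x : Fin n → ZMod 2) : lexNat x < 2 ^ n := by
  rw [lexNat_eq_sum]
  exact sum_bits_lt _ (fun i => by split <;> [exact val_le_one _; omega]) n

lemma lexNat_injective {n : ℕ} : Function.Injective (lexNat (n := n)) := by
  intro x y h
  funext i
  have h2 := congrArg (fun m => Nat.testBit m (i : ℕ)) h
  simp only [lexNat_testBit_lt _ i.isLt, Fin.eta, decide_eq_decide] at h2
  rcases zmod2_cases' (x i) with hx | hx <;> rcases zmod2_cases' (y i) with hy | hy <;>
    simp_all

def dec (n m : ℕ) : Fin n → ZMod 2 := fun i => if m.testBit i then 1 else 0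

lemma lexNat_dec {n m : ℕ} (hm : m < 2 ^ n) : lexNat (dec n m) = m := by
  apply Nat.eq_of_testBit_eq
  intro j
  by_cases h : j < n
  · rw [lexNat_testBit_lt _ h]
    by_cases hb : m.testBit j <;> simp [dec, hb]
  · rw [lexNat_testBit_ge _ h]
    symm
    apply Nat.testBit_lt_two_pow
    exact lt_of_lt_of_le hm (Nat.pow_le_pow_right (by norm_num) (by omega))

lemma zmod2_decide_add (a b : ZMod 2) :
    decide (a + b = 1) = (decide (a = 1) ^^ decide (b = 1)) := by revert a b; decide

lemma lexNat_add {n : ℕ} (x y : Fin n → ZMod 2) :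
    lexNat (x + y) = lexNat x ^^^ lexNat y := by
  apply Nat.eq_of_testBit_eq
  intro j
  rw [Nat.testBit_xor]
  by_cases h : j < n
  · rw [lexNat_testBit_lt (x + y) h, lexNat_testBit_lt x h, lexNat_testBit_lt y h]
    simp only [Pi.add_apply]
    exact zmod2_decide_add _ _
  · rw [lexNat_testBit_ge _ h, lexNat_testBit_ge _ h, lexNat_testBit_ge _ h]
    rfl

lemma exists_msb {c d : ℕ} (h : c < d) :
    ∃ i, c.testBit i = false ∧ d.testBit i = true ∧
      ∀ j, i < j → c.testBit j = d.testBit j := by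
  have hne : c ^^^ d ≠ 0 := by
    intro h0
    have : c = d := by
      apply Nat.eq_of_testBit_eq
      intro j
      have := congrArg (fun m => Nat.testBit m j) h0
      simpa using this
    omega
  obtain ⟨i, hi, hi'⟩ := Nat.exists_most_significant_bit hne
  have hj : ∀ j, i < j → c.testBit j = d.testBit j := by
    intro j hij
    have := hi' j hij
    simp only [Nat.testBit_xor] at this
    rcases hc : c.testBit j <;> rcases hd : d.testBit j <;> simp_all
  simp only [Nat.testBit_xor] at hi
  rcases hc : c.testBit i <;> rcases hd : d.testBit i <;> rw [hc, hd] at hi <;>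
    simp only [Bool.xor_false, Bool.xor_true] at hi
  · simp at hi
  · exact ⟨i, hc, hd, hj⟩
  · exfalso
    have : d < c := Nat.lt_of_testBit i hd hc (fun j hij => (hj j hij).symm)
    omega
  · simp at hi

lemma xor_lemma (a b c : ℕ) (h : c < a ^^^ b) :
    ∃ a' b', a' ≤ a ∧ b' ≤ b ∧ a' ^^^ b' = c := by
  obtain ⟨i, hc, hd, hj⟩ := exists_msb h
  rw [Nat.testBit_xor] at hd
  have key : ∀ u w : ℕ, u.testBit i = true → w.testBit i = false →
      (∀ j, (u.testBit j ^^ w.testBit j) = (a.testBit j ^^ b.testBit j)) → c ^^^ w < u := by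
    intro u w hu hw huw
    apply Nat.lt_of_testBit i
    · simp [hc, hw]
    · exact hu
    · intro j hij
      have h1 := hj j hij
      have h2 := huw j
      simp only [Nat.testBit_xor] at h1 ⊢
      rw [h1, ← h2]
      rcases u.testBit j <;> rcases w.testBit j <;> simp
  rcases ha : a.testBit i <;> rcases hb : b.testBit i <;> rw [ha, hb] at hd <;>
    simp only [Bool.xor_false, Bool.xor_true] at hd
  · simp at hd
  · refine ⟨a, c ^^^ a, le_refl a, le_of_lt ?_, ?_⟩
    · exact key b a hb ha fun j => Bool.xor_comm _ _
    · rw [Nat.xor_comm c a, ← Nat.xor_assoc, Nat.xor_self, Nat.zero_xor]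
  · refine ⟨c ^^^ b, b, le_of_lt ?_, le_refl b, ?_⟩
    · exact key a b ha hb fun j => rfl
    · rw [Nat.xor_assoc, Nat.xor_self, Nat.xor_zero]
  · simp at hd

lemma part1 {n : ℕ} (x y z : Fin n → ZMod 2) (h : lexNat z < lexNat (x + y)) :
    ∃ x' y' : Fin n → ZMod 2, lexNat x' ≤ lexNat x ∧ lexNat y' ≤ lexNat y ∧ z = x' + y' := by
  rw [lexNat_add] at h
  obtain ⟨a', b', ha, hb, hab⟩ := xor_lemma _ _ _ h
  refine ⟨dec n a', dec n b', ?_, ?_, ?_⟩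
  · rw [lexNat_dec (lt_of_le_of_lt ha (lexNat_lt x))]; exact ha
  · rw [lexNat_dec (lt_of_le_of_lt hb (lexNat_lt y))]; exact hb
  · apply lexNat_injective
    rw [lexNat_add, lexNat_dec (lt_of_le_of_lt ha (lexNat_lt x)),
      lexNat_dec (lt_of_le_of_lt hb (lexNat_lt y)), hab]

lemma image_lexNat {n : ℕ} :
    (Finset.univ : Finset (Fin n → ZMod 2)).image lexNat = Finset.range (2 ^ n) := by
  ext m
  simp only [Finset.mem_image, Finset.mem_range, Finset.mem_univ, true_and]
  constructor
  · rintro ⟨x, rfl⟩; exact lexNat_lt x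
  · intro hm; exact ⟨dec n m, lexNat_dec hm⟩

lemma card_filter_lt {n k : ℕ} :
    ((Finset.univ : Finset (Fin n → ZMod 2)).filter fun y => lexNat y < k).card
      = min k (2 ^ n) := by
  have h1 : ((Finset.univ : Finset (Fin n → ZMod 2)).filter fun y => lexNat y < k).card
      = (((Finset.univ : Finset (Fin n → ZMod 2)).filter fun y => lexNat y < k).image
          lexNat).card := by
    rw [Finset.card_image_of_injective _ lexNat_injective]
  rw [h1]
  have h2 : ((Finset.univ : Finset (Fin n → ZMod 2)).filter fun y => lexNat y < k).image
        lexNat = (Finset.range (2 ^ n)).filter (· < k) := by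
    rw [← image_lexNat, Finset.filter_image]
  rw [h2]
  have h3 : (Finset.range (2 ^ n)).filter (· < k) = Finset.range (min k (2 ^ n)) := by
    ext m; simp only [Finset.mem_filter, Finset.mem_range]; omega
  rw [h3, Finset.card_range]

lemma initSeg_eq {n k : ℕ} :
    initSeg (Finset.univ : Finset (Fin n → ZMod 2)) k
      = Finset.univ.filter fun x => lexNat x < k := by
  unfold initSeg
  apply Finset.filter_congr
  intro x _
  rw [card_filter_lt]
  have := lexNat_lt x
  constructor <;> intro <;> omega

end Stmt0Aux

open Stmt0Aux in
theorem stmt0 {n : ℕ} :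
    (∀ x y z : Fin n → ZMod 2, lexNat z < lexNat (x + y) →
      ∃ x' y' : Fin n → ZMod 2, lexNat x' ≤ lexNat x ∧ lexNat y' ≤ lexNat y ∧ z = x' + y') ∧
    (∀ a b : ℕ, ∃ c : ℕ,
      initSeg (Finset.univ : Finset (Fin n → ZMod 2)) a + initSeg Finset.univ b
        = initSeg Finset.univ c) := by
  constructor
  · exact fun x y z h => part1 x y z h
  · intro a b
    rcases Nat.eq_zero_or_pos a with ha | ha
    · refine ⟨0, ?_⟩
      subst ha
      rw [initSeg_eq (k := 0)]
      simp [initSeg_eq]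
    rcases Nat.eq_zero_or_pos b with hb | hb
    · refine ⟨0, ?_⟩
      subst hb
      rw [initSeg_eq (k := 0)]
      simp [initSeg_eq]
    -- both nonempty
    set A := initSeg (Finset.univ : Finset (Fin n → ZMod 2)) a with hA
    set B := initSeg (Finset.univ : Finset (Fin n → ZMod 2)) b with hB
    have hAmem : ∀ x, x ∈ A ↔ lexNat x < a := by
      intro x; rw [hA, initSeg_eq]; simp
    have hBmem : ∀ x, x ∈ B ↔ lexNat x < b := by
      intro x; rw [hB, initSeg_eq]; simp
    have hzero : lexNat (fun _ : Fin n => (0 : ZMod 2)) = 0 := by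
      simp [lexNat]
    have hAne : A.Nonempty := ⟨_, (hAmem _).mpr (by rw [hzero]; omega)⟩
    have hBne : B.Nonempty := ⟨_, (hBmem _).mpr (by rw [hzero]; omega)⟩
    set S := (A ×ˢ B).image fun p => lexNat (p.1 + p.2) with hS
    have hSne : S.Nonempty := by
      obtain ⟨x, hx⟩ := hAne; obtain ⟨y, hy⟩ := hBne
      exact ⟨_, Finset.mem_image_of_mem _ (Finset.mk_mem_product hx hy)⟩
    set m := S.max' hSne with hm
    refine ⟨m + 1, ?_⟩
    rw [initSeg_eq]
    ext z
    simp only [Finset.mem_filter, Finset.mem_univ, true_and, Nat.lt_succ_iff]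
    constructor
    · intro hz
      rw [Finset.mem_add] at hz
      obtain ⟨x, hx, y, hy, rfl⟩ := hz
      apply Finset.le_max'
      exact Finset.mem_image_of_mem _ (Finset.mk_mem_product hx hy)
    · intro hz
      have hmS : m ∈ S := S.max'_mem hSne
      rw [hS, Finset.mem_image] at hmS
      obtain ⟨⟨x, y⟩, hxy, hlex⟩ := hmS
      rw [Finset.mem_product] at hxy
      rcases eq_or_lt_of_le hz with heq | hlt
      · have : z = x + y := lexNat_injective (by rw [heq, hlex])
        rw [Finset.mem_add]
        exact ⟨x, hxy.1, y, hxy.2, this.symm⟩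
      · rw [← hlex] at hlt
        obtain ⟨x', y', hx', hy', rfl⟩ := part1 x y z hlt
        rw [Finset.mem_add]
        refine ⟨x', ?_, y', ?_, rfl⟩
        · rw [hAmem]; exact lt_of_le_of_lt hx' ((hAmem x).mp hxy.1)
        · rw [hBmem]; exact lt_of_le_of_lt hy' ((hBmem y).mp hxy.2)
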